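/- For coprime positive integers a and c, the Dedekind sums satisfy the reciprocity law s(a,c) + s(c,a) = -1/4 + (1/12)·(a/c + c/a + 1/(a·c)). -/

import Mathlib

/-- The sawtooth function `((x)) = x - ⌊x⌋ - 1/2` for `x ∉ ℤ`, and `((x)) = 0` for `x ∈ ℤ`. -/
noncomputable def saw (x : ℚ) : ℚ := if x.den = 1 then 0 else x - ⌊x⌋ - 1 / 2

/-- The Dedekind sum `s(a, c) = ∑_{k=1}^{c-1} ((k/c)) ((k a/c))`. -/
noncomputable def dedekindSum (a c : ℤ) : ℚ :=
  ∑ k ∈ Finset.Icc (1 : ℤ) (c - 1), saw ((k : ℚ) / (c : ℚ)) * saw ((k : ℚ) * (a : ℚ) / (c : ℚ))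

/-- The Dedekind symbol `Φ` on `SL₂(ℤ)`. -/
noncomputable def dedekindPhi (γ : Matrix.SpecialLinearGroup (Fin 2) ℤ) : ℚ :=
  if (γ : Matrix (Fin 2) (Fin 2) ℤ) 1 0 = 0 then
    ((γ : Matrix (Fin 2) (Fin 2) ℤ) 0 1 : ℚ) / ((γ : Matrix (Fin 2) (Fin 2) ℤ) 1 1 : ℚ)
  else
    (((γ : Matrix (Fin 2) (Fin 2) ℤ) 0 0 : ℚ) + ((γ : Matrix (Fin 2) (Fin 2) ℤ) 1 1 : ℚ)) /
        ((γ : Matrix (Fin 2) (Fin 2) ℤ) 1 0 : ℚ) -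
      12 * (((γ : Matrix (Fin 2) (Fin 2) ℤ) 1 0).sign : ℚ) *
        dedekindSum ((γ : Matrix (Fin 2) (Fin 2) ℤ) 0 0) |(γ : Matrix (Fin 2) (Fin 2) ℤ) 1 0|

/-- The Rademacher symbol `Ψ(γ) = Φ(γ) - 3 sign(c (a + d))` on `SL₂(ℤ)`. -/
noncomputable def rademacherPsi (γ : Matrix.SpecialLinearGroup (Fin 2) ℤ) : ℚ :=
  dedekindPhi γ -
    3 * (((γ : Matrix (Fin 2) (Fin 2) ℤ) 1 0 *
      ((γ : Matrix (Fin 2) (Fin 2) ℤ) 0 0 + (γ : Matrix (Fin 2) (Fin 2) ℤ) 1 1)).sign : ℚ)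



-- Gauss sums over Int.Icc
lemma Icc_insert_top (n : ℤ) (hn : 0 ≤ n) :
    Finset.Icc (1:ℤ) (n+1) = insert (n+1) (Finset.Icc 1 n) := by
  ext x; simp only [Finset.mem_Icc, Finset.mem_insert]; omega

lemma sum_Icc_id (n : ℤ) (hn : 0 ≤ n) : 2 * ∑ k ∈ Finset.Icc (1:ℤ) n, k = n * (n + 1) := by
  refine Int.le_induction (motive := fun n _ => 2 * ∑ k ∈ Finset.Icc (1:ℤ) n, k = n * (n + 1)) ?_ ?_ n hn
  · simp
  · intro n hn ih
    rw [Icc_insert_top n hn, Finset.sum_insert (by simp), mul_add, ih]; ring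

lemma sum_Icc_sq (n : ℤ) (hn : 0 ≤ n) :
    6 * ∑ k ∈ Finset.Icc (1:ℤ) n, k^2 = n * (n + 1) * (2*n + 1) := by
  refine Int.le_induction (motive := fun n _ => 6 * ∑ k ∈ Finset.Icc (1:ℤ) n, k^2 = n * (n + 1) * (2*n + 1)) ?_ ?_ n hn
  · simp
  · intro n hn ih
    rw [Icc_insert_top n hn, Finset.sum_insert (by simp), mul_add, ih]; ring

lemma emod_mul_emod (x y c : ℤ) : x % c * y % c = x * y % c := by
  rw [Int.mul_emod, Int.emod_emod_of_dvd _ dvd_rfl, ← Int.mul_emod]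

-- permutation of residues
lemma perm_sum (a c : ℤ) (hc : 0 < c) (h : IsCoprime a c) (f : ℤ → ℤ) :
    ∑ k ∈ Finset.Icc (1:ℤ) (c-1), f (k * a % c) = ∑ k ∈ Finset.Icc (1:ℤ) (c-1), f k := by
  obtain ⟨u, v, huv⟩ := h
  have hmem : ∀ b : ℤ, IsCoprime b c → ∀ k ∈ Finset.Icc (1:ℤ) (c-1), k * b % c ∈ Finset.Icc (1:ℤ) (c-1) := by
    intro b hb k hk
    simp only [Finset.mem_Icc] at hk ⊢
    have h0 : 0 ≤ k * b % c := Int.emod_nonneg _ (by omega)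
    have h1 : k * b % c < c := Int.emod_lt_of_pos _ hc
    have hne : k * b % c ≠ 0 := by
      intro h0'
      have : c ∣ k * b := Int.dvd_of_emod_eq_zero h0'
      have : c ∣ k := (hb.symm).dvd_of_dvd_mul_right this
      have := Int.le_of_dvd (by omega) this
      omega
    omega
  have hac : IsCoprime a c := ⟨u, v, huv⟩
  have huc : IsCoprime u c := ⟨a, v, by linarith [huv]⟩
  refine Finset.sum_nbij' (fun k => k * a % c) (fun k => k * u % c) ?_ ?_ ?_ ?_ ?_
  · exact hmem a hac
  · exact hmem u huc
  · intro k hk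
    simp only [Finset.mem_Icc] at hk
    show k * a % c * u % c = k
    rw [emod_mul_emod]
    have : k * a * u = k + (-(k*v)) * c := by nlinarith [huv]
    rw [this, Int.add_mul_emod_self_right, Int.emod_eq_of_lt (by omega) (by omega)]
  · intro k hk
    simp only [Finset.mem_Icc] at hk
    show k * u % c * a % c = k
    rw [emod_mul_emod]
    have : k * u * a = k + (-(k*v)) * c := by nlinarith [huv]
    rw [this, Int.add_mul_emod_self_right, Int.emod_eq_of_lt (by omega) (by omega)]
  · intro k hk; rfl


lemma saw_eval (m c : ℤ) (hc : 0 < c) (h : ¬ c ∣ m) :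
    saw ((m:ℚ)/(c:ℚ)) = (m:ℚ)/c - ((m / c : ℤ):ℚ) - 1/2 := by
  have hden : ((m:ℚ)/(c:ℚ)).den ≠ 1 := by
    intro hd
    apply h
    have h1 : ((m:ℚ)/(c:ℚ)) = (((m:ℚ)/(c:ℚ)).num : ℚ) :=
      (Rat.coe_int_num_of_den_eq_one hd).symm
    have hc0 : (c:ℚ) ≠ 0 := Int.cast_ne_zero.mpr (by omega)
    have : (m:ℚ) = (((m:ℚ)/(c:ℚ)).num : ℚ) * c := by
      field_simp at h1 ⊢
      linarith [h1]
    have : m = ((m:ℚ)/(c:ℚ)).num * c := by exact_mod_cast this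
    exact ⟨_, by linarith [this]⟩
  rw [saw, if_neg hden]
  have hfl : ⌊(m:ℚ)/(c:ℚ)⌋ = m / c := by
    rcases Int.lt_or_lt_of_ne (show c ≠ 0 by omega) with h' | h'
    · omega
    · have : (c:ℚ) = ((c.toNat : ℕ) : ℚ) := by
        norm_cast
        omega
      rw [this, Rat.floor_intCast_div_natCast]
      congr 1
      omega
  rw [hfl]

-- floor division basic bounds
lemma ediv_mem (a c k : ℤ) (ha : 0 < a) (hc : 0 < c) (hk : 1 ≤ k ∧ k ≤ c - 1) :
    0 ≤ k * a / c ∧ k * a / c ≤ a - 1 := by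
  constructor
  · exact Int.ediv_nonneg (by nlinarith) (by omega)
  · have : k * a / c < a := by
      rw [Int.ediv_lt_iff_lt_mul hc]
      nlinarith
    omega

lemma not_dvd_mul (a c k : ℤ) (h : IsCoprime a c) (hk : 1 ≤ k ∧ k ≤ c - 1) : ¬ c ∣ k * a := by
  intro hd
  have : c ∣ k := h.symm.dvd_of_dvd_mul_right hd
  have := Int.le_of_dvd (by omega) this
  omega

lemma filter_j (a c k : ℤ) (ha : 0 < a) (hc : 0 < c) (h : IsCoprime a c)
    (hk : 1 ≤ k ∧ k ≤ c - 1) :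
    (Finset.Icc (1:ℤ) (a-1)).filter (fun j => j * c < k * a) = Finset.Icc 1 (k * a / c) := by
  have hne : ∀ j : ℤ, j * c ≠ k * a := by
    intro j hj
    exact not_dvd_mul a c k h hk ⟨j, by linarith [hj]⟩
  ext j
  simp only [Finset.mem_filter, Finset.mem_Icc]
  constructor
  · rintro ⟨⟨h1, h2⟩, h3⟩
    refine ⟨h1, ?_⟩
    rw [Int.le_ediv_iff_mul_le hc]
    omega
  · rintro ⟨h1, h2⟩
    have hmul : j * c ≤ k * a := by
      rw [← Int.le_ediv_iff_mul_le hc]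
      exact h2
    have hq := ediv_mem a c k ha hc hk
    exact ⟨⟨h1, by omega⟩, lt_of_le_of_ne hmul (hne j)⟩

lemma filter_k (a c j : ℤ) (ha : 0 < a) (hc : 0 < c) (hj : 0 ≤ j) :
    (Finset.Icc (1:ℤ) (c-1)).filter (fun k => j * c < k * a) = Finset.Icc (j * c / a + 1) (c-1) := by
  ext k
  simp only [Finset.mem_filter, Finset.mem_Icc]
  have hiff : j * c / a < k ↔ j * c < k * a := Int.ediv_lt_iff_lt_mul ha
  have hp : 0 ≤ j * c / a ∨ j * c / a < 0 := by omega
  constructor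
  · rintro ⟨⟨h1, h2⟩, h3⟩
    rw [← hiff] at h3
    omega
  · rintro ⟨h1, h2⟩
    have h3 : j * c < k * a := by rw [← hiff]; omega
    have h4 : 0 ≤ j * c / a := Int.ediv_nonneg (by nlinarith) (by omega)
    exact ⟨⟨by omega, h2⟩, h3⟩

lemma ediv_refl (a c k : ℤ) (hc : 0 < c) (h : IsCoprime a c) (hk : 1 ≤ k ∧ k ≤ c - 1) :
    (c - k) * a / c = a - 1 - k * a / c := by
  have hdm := Int.mul_ediv_add_emod (k * a) c
  have hr0 : 0 ≤ k * a % c := Int.emod_nonneg _ (by omega)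
  have hr1 : k * a % c < c := Int.emod_lt_of_pos _ hc
  have hrne : k * a % c ≠ 0 := by
    intro h0
    exact not_dvd_mul a c k h hk (Int.dvd_of_emod_eq_zero h0)
  have key : (c - k) * a = (c - k * a % c) + c * (a - 1 - k * a / c) := by ring_nf; linarith [hdm]
  rw [key, Int.add_mul_ediv_left _ _ (show c ≠ 0 by omega),
    Int.ediv_eq_zero_of_lt (by omega) (by omega)]
  ring

lemma refl_sum (a c : ℤ) (hc : 0 < c) (h : IsCoprime a c) :
    2 * ∑ k ∈ Finset.Icc (1:ℤ) (c-1), k * a / c = (a - 1) * (c - 1) := by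
  have hswap : ∑ k ∈ Finset.Icc (1:ℤ) (c-1), k * a / c
      = ∑ k ∈ Finset.Icc (1:ℤ) (c-1), (a - 1 - k * a / c) := by
    refine Finset.sum_nbij' (fun k => c - k) (fun k => c - k) ?_ ?_ ?_ ?_ ?_
    · intro k hk; simp only [Finset.mem_Icc] at *; omega
    · intro k hk; simp only [Finset.mem_Icc] at *; omega
    · intro k hk; show c - (c - k) = k; omega
    · intro k hk; show c - (c - k) = k; omega
    · intro k hk
      simp only [Finset.mem_Icc] at hk
      show k * a / c = a - 1 - (c - k) * a / c
      have := ediv_refl a c (c - k) hc h (by omega)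
      have h2 : c - (c - k) = k := by omega
      rw [h2] at this
      omega
  rw [two_mul]
  nth_rewrite 2 [hswap]
  rw [← Finset.sum_add_distrib]
  have : ∀ k ∈ Finset.Icc (1:ℤ) (c-1), (k * a / c + (a - 1 - k * a / c)) = a - 1 :=
    fun k _ => by ring
  rw [Finset.sum_congr rfl this, Finset.sum_const, Int.card_Icc, nsmul_eq_mul]
  have : ((c - 1 + 1 - 1).toNat : ℤ) = c - 1 := by omega
  rw [this]; ring

-- the permutation identity, expanded
lemma perm_expanded (a c : ℤ) (hc : 0 < c) (h : IsCoprime a c) :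
    a^2 * (∑ k ∈ Finset.Icc (1:ℤ) (c-1), k^2)
      - 2*a*c * (∑ k ∈ Finset.Icc (1:ℤ) (c-1), k * (k * a / c))
      + c^2 * (∑ k ∈ Finset.Icc (1:ℤ) (c-1), (k * a / c)^2)
    = ∑ k ∈ Finset.Icc (1:ℤ) (c-1), k^2 := by
  have hp := perm_sum a c hc h (fun m => m^2)
  have hcong : ∀ k ∈ Finset.Icc (1:ℤ) (c-1),
      (k * a % c)^2 = a^2*k^2 - 2*a*c*(k*(k*a/c)) + c^2*(k*a/c)^2 := by
    intro k _
    rw [Int.emod_def]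
    ring
  rw [Finset.sum_congr rfl hcong, Finset.sum_add_distrib, Finset.sum_sub_distrib,
    ← Finset.mul_sum, ← Finset.mul_sum, ← Finset.mul_sum] at hp
  linarith [hp]

lemma count_sq (a c : ℤ) (ha : 0 < a) (hc : 0 < c) (h : IsCoprime a c) :
    ∑ k ∈ Finset.Icc (1:ℤ) (c-1), (k * a / c)^2
      = (∑ k ∈ Finset.Icc (1:ℤ) (c-1), k * a / c)
        + 2 * ((c-1) * (∑ j ∈ Finset.Icc (1:ℤ) (a-1), j)
            - (∑ j ∈ Finset.Icc (1:ℤ) (a-1), j * (j * c / a))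
            + (∑ j ∈ Finset.Icc (1:ℤ) (a-1), j * c / a)
            - (c-1) * (a-1)) := by
  have step1 : ∀ k ∈ Finset.Icc (1:ℤ) (c-1),
      (k * a / c)^2 = k * a / c
        + 2 * ∑ j ∈ Finset.Icc (1:ℤ) (a-1), ((j - 1) * if j * c < k * a then 1 else 0) := by
    intro k hk
    simp only [Finset.mem_Icc] at hk
    have hq := ediv_mem a c k ha hc hk
    have hfil := filter_j a c k ha hc h hk
    have h2 : ∑ j ∈ Finset.Icc (1:ℤ) (a-1), ((j - 1) * if j * c < k * a then 1 else 0)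
        = ∑ j ∈ Finset.Icc (1:ℤ) (k * a / c), (j - 1) := by
      simp only [mul_ite, mul_one, mul_zero]
      rw [← Finset.sum_filter, hfil]
    rw [h2, Finset.sum_sub_distrib, Finset.sum_const, Int.card_Icc, nsmul_eq_mul]
    have hts : ((k * a / c + 1 - 1).toNat : ℤ) = k * a / c := by omega
    rw [hts]
    have := sum_Icc_id (k * a / c) hq.1
    nlinarith [this]
  rw [Finset.sum_congr rfl step1, Finset.sum_add_distrib, ← Finset.mul_sum]
  congr 1
  rw [Finset.sum_comm]
  have step2 : ∀ j ∈ Finset.Icc (1:ℤ) (a-1),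
      (∑ k ∈ Finset.Icc (1:ℤ) (c-1), ((j - 1) * if j * c < k * a then 1 else 0))
        = (c-1) * j - j * (j * c / a) + (j * c / a) - (c-1) := by
    intro j hj
    simp only [Finset.mem_Icc] at hj
    have hple : j * c / a ≤ c - 1 := by
      have : j * c / a < c := by
        rw [Int.ediv_lt_iff_lt_mul ha]
        nlinarith
      omega
    have hp0 : 0 ≤ j * c / a := Int.ediv_nonneg (by nlinarith) (by omega)
    rw [← Finset.mul_sum, Finset.sum_boole, filter_k a c j ha hc (by omega), Int.card_Icc]
    have hts : ((c - 1 + 1 - (j * c / a + 1)).toNat : ℤ) = c - 1 - j * c / a := by omega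
    rw [hts]
    ring
  rw [Finset.sum_congr rfl step2]
  congr 1
  rw [Finset.sum_sub_distrib, Finset.sum_add_distrib, Finset.sum_sub_distrib,
    ← Finset.mul_sum, Finset.sum_const, Int.card_Icc, nsmul_eq_mul]
  have : ((a - 1 + 1 - 1).toNat : ℤ) = a - 1 := by omega
  rw [this]
  ring


lemma sum_split (a c : ℤ) (hc : 0 < c) :
    ∑ k ∈ Finset.Icc (1:ℤ) (c-1),
        (4*a*k^2 - 4*c*(k*(k*a/c)) - 2*(1+a)*c*k + 2*c^2*(k*a/c) + c^2)
    = 4*a*(∑ k ∈ Finset.Icc (1:ℤ) (c-1), k^2)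
      - 4*c*(∑ k ∈ Finset.Icc (1:ℤ) (c-1), k*(k*a/c))
      - 2*(1+a)*c*(∑ k ∈ Finset.Icc (1:ℤ) (c-1), k)
      + 2*c^2*(∑ k ∈ Finset.Icc (1:ℤ) (c-1), k*a/c)
      + (c-1)*c^2 := by
  rw [Finset.sum_add_distrib, Finset.sum_add_distrib, Finset.sum_sub_distrib,
    Finset.sum_sub_distrib, ← Finset.mul_sum, ← Finset.mul_sum, ← Finset.mul_sum,
    ← Finset.mul_sum, Finset.sum_const, Int.card_Icc, nsmul_eq_mul]
  have : ((c - 1 + 1 - 1).toNat : ℤ) = c - 1 := by omega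
  rw [this]

lemma dedekind_expand (a c : ℤ) (hc : 0 < c) (h : IsCoprime a c) :
    dedekindSum a c
      = (4*(a:ℚ)*(↑(∑ k ∈ Finset.Icc (1:ℤ) (c-1), k^2))
          - 4*(c:ℚ)*(↑(∑ k ∈ Finset.Icc (1:ℤ) (c-1), k*(k*a/c)))
          - 2*(1+(a:ℚ))*(c:ℚ)*(↑(∑ k ∈ Finset.Icc (1:ℤ) (c-1), k))
          + 2*(c:ℚ)^2*(↑(∑ k ∈ Finset.Icc (1:ℤ) (c-1), k*a/c))
          + ((c:ℚ)-1)*(c:ℚ)^2) / (4*(c:ℚ)^2) := by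
  have hc0 : (c:ℚ) ≠ 0 := Int.cast_ne_zero.mpr (by omega)
  rw [dedekindSum]
  have step : ∀ k ∈ Finset.Icc (1:ℤ) (c-1),
      saw ((k : ℚ) / (c : ℚ)) * saw ((k : ℚ) * (a : ℚ) / (c : ℚ))
        = ((4*a*k^2 - 4*c*(k*(k*a/c)) - 2*(1+a)*c*k + 2*c^2*(k*a/c) + c^2 : ℤ) : ℚ)
            / (4*(c:ℚ)^2) := by
    intro k hk
    simp only [Finset.mem_Icc] at hk
    have h1 : saw ((k : ℚ) / (c : ℚ)) = (k:ℚ)/c - ((k / c : ℤ):ℚ) - 1/2 :=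
      saw_eval k c hc (by intro hd; have := Int.le_of_dvd (by omega) hd; omega)
    have hk0 : (k / c : ℤ) = 0 := Int.ediv_eq_zero_of_lt (by omega) (by omega)
    have hcast : (k : ℚ) * (a : ℚ) / (c : ℚ) = ((k * a : ℤ) : ℚ) / (c : ℚ) := by
      push_cast; ring
    have h2 : saw ((k : ℚ) * (a : ℚ) / (c : ℚ))
        = ((k * a : ℤ):ℚ)/c - ((k * a / c : ℤ):ℚ) - 1/2 := by
      rw [hcast]
      exact saw_eval (k * a) c hc (not_dvd_mul a c k h ⟨hk.1, hk.2⟩)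
    rw [h1, h2, hk0]
    push_cast
    field_simp
    ring
  rw [Finset.sum_congr rfl step, ← Finset.sum_div]
  congr 1
  rw [← Int.cast_sum, sum_split a c hc]
  push_cast
  ring


/-- Dedekind sum reciprocity: for coprime positive integers `a`, `c`,
`s(a,c) + s(c,a) = -1/4 + (1/12)(a/c + c/a + 1/(ac))`. -/
theorem dedekind_sum_reciprocity (a c : ℤ) (ha : 0 < a) (hc : 0 < c) (h : IsCoprime a c) :
    dedekindSum a c + dedekindSum c a =
      -(1 / 4) + (1 / 12) * ((a : ℚ) / (c : ℚ) + (c : ℚ) / (a : ℚ) + 1 / ((a : ℚ) * (c : ℚ))) := by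
  have ha0 : (a:ℚ) ≠ 0 := Int.cast_ne_zero.mpr (by omega)
  have hc0 : (c:ℚ) ≠ 0 := Int.cast_ne_zero.mpr (by omega)
  rw [dedekind_expand a c hc h, dedekind_expand c a ha h.symm]
  have h1 := perm_expanded a c hc h
  have h5 := count_sq a c ha hc h
  have hEz := refl_sum a c hc h
  have hFz := refl_sum c a ha h.symm
  have hLcz := sum_Icc_id (c-1) (by omega)
  have hLaz := sum_Icc_id (a-1) (by omega)
  have hScz := sum_Icc_sq (c-1) (by omega)
  have hSaz := sum_Icc_sq (a-1) (by omega)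
  set Sc := ∑ k ∈ Finset.Icc (1:ℤ) (c-1), k^2 with hSc_def
  set A := ∑ k ∈ Finset.Icc (1:ℤ) (c-1), k*(k*a/c) with hA_def
  set Lc := ∑ k ∈ Finset.Icc (1:ℤ) (c-1), k with hLc_def
  set E := ∑ k ∈ Finset.Icc (1:ℤ) (c-1), k*a/c with hE_def
  set Q := ∑ k ∈ Finset.Icc (1:ℤ) (c-1), (k*a/c)^2 with hQ_def
  set Sa := ∑ j ∈ Finset.Icc (1:ℤ) (a-1), j^2 with hSa_def
  set B := ∑ j ∈ Finset.Icc (1:ℤ) (a-1), j*(j*c/a) with hB_def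
  set La := ∑ j ∈ Finset.Icc (1:ℤ) (a-1), j with hLa_def
  set F := ∑ j ∈ Finset.Icc (1:ℤ) (a-1), j*c/a with hF_def
  have keyZ : 2*a*c*A + 2*c^2*B
      = (a^2-1)*Sc + c^2*E + 2*c^2*(c-1)*La + 2*c^2*F - 2*c^2*(c-1)*(a-1) := by
    linear_combination (-1 : ℤ)*h1 + c^2*h5
  have keyQ : 2*(a:ℚ)*(c:ℚ)*(A:ℚ) + 2*(c:ℚ)^2*(B:ℚ)
      = ((a:ℚ)^2-1)*(Sc:ℚ) + (c:ℚ)^2*(E:ℚ) + 2*(c:ℚ)^2*((c:ℚ)-1)*(La:ℚ)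
        + 2*(c:ℚ)^2*(F:ℚ) - 2*(c:ℚ)^2*((c:ℚ)-1)*((a:ℚ)-1) := by exact_mod_cast keyZ
  have hA : (A:ℚ) = (((a:ℚ)^2-1)*(Sc:ℚ) + (c:ℚ)^2*(E:ℚ) + 2*(c:ℚ)^2*((c:ℚ)-1)*(La:ℚ)
        + 2*(c:ℚ)^2*(F:ℚ) - 2*(c:ℚ)^2*((c:ℚ)-1)*((a:ℚ)-1) - 2*(c:ℚ)^2*(B:ℚ))
      / (2*(a:ℚ)*(c:ℚ)) := by
    rw [eq_div_iff (by simp [ha0, hc0])]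
    linear_combination keyQ
  have hE : (E:ℚ) = ((a:ℚ)-1)*((c:ℚ)-1)/2 := by
    have h' : 2*(E:ℚ) = ((a:ℚ)-1)*((c:ℚ)-1) := by exact_mod_cast hEz
    linarith
  have hF : (F:ℚ) = ((c:ℚ)-1)*((a:ℚ)-1)/2 := by
    have h' : 2*(F:ℚ) = ((c:ℚ)-1)*((a:ℚ)-1) := by exact_mod_cast hFz
    linarith
  have hLc : (Lc:ℚ) = ((c:ℚ)-1)*(c:ℚ)/2 := by
    have h' : 2*(Lc:ℚ) = ((c:ℚ)-1)*(((c:ℚ)-1)+1) := by exact_mod_cast hLcz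
    linarith
  have hLa : (La:ℚ) = ((a:ℚ)-1)*(a:ℚ)/2 := by
    have h' : 2*(La:ℚ) = ((a:ℚ)-1)*(((a:ℚ)-1)+1) := by exact_mod_cast hLaz
    linarith
  have hSc : (Sc:ℚ) = ((c:ℚ)-1)*(c:ℚ)*(2*(c:ℚ)-1)/6 := by
    have h' : 6*(Sc:ℚ) = ((c:ℚ)-1)*(((c:ℚ)-1)+1)*(2*((c:ℚ)-1)+1) := by exact_mod_cast hScz
    linarith [h']
  have hSa : (Sa:ℚ) = ((a:ℚ)-1)*(a:ℚ)*(2*(a:ℚ)-1)/6 := by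
    have h' : 6*(Sa:ℚ) = ((a:ℚ)-1)*(((a:ℚ)-1)+1)*(2*((a:ℚ)-1)+1) := by exact_mod_cast hSaz
    linarith [h']
  rw [hA, hE, hF, hLc, hLa, hSc, hSa]
  field_simp
  ring
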